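/- Let P ⊆ ℝ^d be a lattice d-polytope with codenominator r and 0 ∈ P. Then for every rational λ > 0, the number of lattice points in λP equals 1 plus the sum over ω ∈ (1/r)ℤ with 0 < ω ≤ λ of the number of lattice points on the part of the boundary of ωP lying on facets not containing the origin. -/

import Mathlib

/-- For a lattice polytope `P = {x : A x ≤ b}` with `0 ∈ P` (so `b ≥ 0`) and codenominator
`r`, and any rational `λ > 0`, the number of lattice points of `λP` equals `1` plus the
sum, over `ω = k/r` with `k ∈ ℤ`, `0 < k/r ≤ λ`, of the number of lattice points lying on
the facets of `ωP` not containing the origin. -/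
theorem stmt9 {d n : ℕ} (A : Matrix (Fin n) (Fin d) ℤ) (b : Fin n → ℤ)
    (hgcd : ∀ i, Int.gcd (Finset.univ.gcd (A i)) (b i) = 1)
    (hb : ∀ i, 0 ≤ b i)
    (V : Finset (Fin d → ℤ))
    (hlat : {x : Fin d → ℝ | ∀ i, (∑ j, (A i j : ℝ) * x j) ≤ b i}
      = convexHull ℝ ((fun (v : Fin d → ℤ) (j : Fin d) => ((v j : ℤ) : ℝ)) '' (V : Set (Fin d → ℤ))))
    (r : ℤ) (hr : r = (Finset.univ.filter (fun i => b i ≠ 0)).lcm b) (hrpos : 0 < r)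
    (lam : ℚ) (hlam : 0 < lam) :
    {x : Fin d → ℤ | ∀ i, (∑ j, (A i j : ℚ) * (x j : ℚ)) ≤ (lam : ℚ) * b i}.ncard =
      1 + ∑ k ∈ Finset.Icc (1 : ℤ) ⌊(r : ℚ) * lam⌋,
        {x : Fin d → ℤ |
            (∀ i, (∑ j, (A i j : ℚ) * (x j : ℚ)) ≤ ((k : ℚ) / (r : ℚ)) * b i) ∧
            ∃ i, b i ≠ 0 ∧ (∑ j, (A i j : ℚ) * (x j : ℚ)) = ((k : ℚ) / (r : ℚ)) * b i}.ncard := by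
  classical
  have rQ0 : (0:ℚ) < (r:ℚ) := by exact_mod_cast hrpos
  have hlamR : (0:ℝ) < (lam:ℝ) := by exact_mod_cast hlam
  have hbdvd : ∀ i, b i ≠ 0 → b i ∣ r := by
    intro i hi
    rw [hr]
    exact Finset.dvd_lcm (by simp [hi])
  have hbpos : ∀ i, b i ≠ 0 → 0 < b i := fun i hi => lt_of_le_of_ne (hb i) (Ne.symm hi)
  have hbq : ∀ i, b i ≠ 0 → b i * (r / b i) = r := fun i hi => Int.mul_ediv_cancel' (hbdvd i hi)
  have hqpos : ∀ i, b i ≠ 0 → 0 < r / b i := by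
    intro i hi
    nlinarith [hbq i hi, hbpos i hi, hrpos]
  have hcast : ∀ (i : Fin n) (x : Fin d → ℤ),
      (∑ j, (A i j:ℚ) * (x j:ℚ)) = ((∑ j, A i j * x j : ℤ) : ℚ) := by
    intro i x; push_cast; rfl
  simp only [hcast]
  set m : ℤ := ⌊(r:ℚ) * lam⌋ with hm
  set S : Set (Fin d → ℤ) := {x | ∀ i, ((∑ j, A i j * x j : ℤ):ℚ) ≤ lam * (b i : ℚ)} with hSdef
  set T : ℤ → Set (Fin d → ℤ) := fun k =>
    {x | (∀ i, ((∑ j, A i j * x j : ℤ):ℚ) ≤ ((k:ℚ)/(r:ℚ)) * (b i : ℚ)) ∧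
      ∃ i, b i ≠ 0 ∧ ((∑ j, A i j * x j : ℤ):ℚ) = ((k:ℚ)/(r:ℚ)) * (b i : ℚ)} with hTdef
  -- convert goal to S and T
  show S.ncard = 1 + ∑ k ∈ Finset.Icc (1:ℤ) m, (T k).ncard
  -- key inequality translations
  have hle : ∀ (i : Fin n), b i ≠ 0 → ∀ (k : ℤ) (x : Fin d → ℤ),
      (((∑ j, A i j * x j : ℤ):ℚ) ≤ ((k:ℚ)/(r:ℚ)) * (b i:ℚ) ↔
        (∑ j, A i j * x j) * (r / b i) ≤ k) := by
    intro i hi k x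
    have h1 : (((∑ j, A i j * x j : ℤ):ℚ) ≤ ((k:ℚ)/(r:ℚ)) * (b i:ℚ)) ↔
        ((∑ j, A i j * x j) * r ≤ k * b i) := by
      rw [div_mul_eq_mul_div, le_div_iff₀ rQ0]
      exact_mod_cast Iff.rfl
    rw [h1, show (∑ j, A i j * x j) * r = ((∑ j, A i j * x j) * (r / b i)) * (b i) by
      rw [mul_assoc, mul_comm (r / b i), hbq i hi]]
    exact mul_le_mul_iff_of_pos_right (hbpos i hi)
  have heq : ∀ (i : Fin n), b i ≠ 0 → ∀ (k : ℤ) (x : Fin d → ℤ),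
      (((∑ j, A i j * x j : ℤ):ℚ) = ((k:ℚ)/(r:ℚ)) * (b i:ℚ) ↔
        (∑ j, A i j * x j) * (r / b i) = k) := by
    intro i hi k x
    have h1 : (((∑ j, A i j * x j : ℤ):ℚ) = ((k:ℚ)/(r:ℚ)) * (b i:ℚ)) ↔
        ((∑ j, A i j * x j) * r = k * b i) := by
      rw [div_mul_eq_mul_div, eq_div_iff (ne_of_gt rQ0)]
      exact_mod_cast Iff.rfl
    rw [h1, show (∑ j, A i j * x j) * r = ((∑ j, A i j * x j) * (r / b i)) * (b i) by
      rw [mul_assoc, mul_comm (r / b i), hbq i hi]]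
    constructor
    · intro h; exact mul_right_cancel₀ hi h
    · intro h; rw [h]
  -- boundedness of P
  have hPbd : Bornology.IsBounded {x : Fin d → ℝ | ∀ i, (∑ j, (A i j : ℝ) * x j) ≤ b i} := by
    rw [hlat]
    exact isBounded_convexHull.mpr (V.finite_toSet.image _).isBounded
  obtain ⟨C, hC⟩ := isBounded_iff_forall_norm_le.mp hPbd
  -- only 0 satisfies A x ≤ 0
  have hzero : ∀ x : Fin d → ℤ, (∀ i, (∑ j, A i j * x j) ≤ 0) → x = 0 := by
    intro x hx
    by_contra hx0
    obtain ⟨j0, hj0⟩ := Function.ne_iff.mp hx0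
    have hmemP : ∀ mN : ℕ, (fun j => (mN:ℝ) * (x j : ℝ)) ∈
        {x : Fin d → ℝ | ∀ i, (∑ j, (A i j : ℝ) * x j) ≤ b i} := by
      intro mN i
      have hEq : (∑ j, (A i j:ℝ) * ((mN:ℝ) * (x j:ℝ))) = (mN:ℝ) * ((∑ j, A i j * x j : ℤ):ℝ) := by
        push_cast
        rw [Finset.mul_sum]
        exact Finset.sum_congr rfl (fun j _ => by ring)
      have h1 : ((∑ j, A i j * x j : ℤ):ℝ) ≤ 0 := by exact_mod_cast hx i
      have h2 : (0:ℝ) ≤ (b i : ℝ) := by exact_mod_cast hb i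
      calc (∑ j, (A i j:ℝ) * ((mN:ℝ) * (x j:ℝ)))
          = (mN:ℝ) * ((∑ j, A i j * x j : ℤ):ℝ) := hEq
        _ ≤ 0 := mul_nonpos_of_nonneg_of_nonpos (Nat.cast_nonneg mN) h1
        _ ≤ (b i : ℝ) := h2
    have hxj : (1:ℝ) ≤ |(x j0 : ℝ)| := by
      have : (1:ℤ) ≤ |x j0| := Int.one_le_abs (by simpa using hj0)
      calc (1:ℝ) = ((1:ℤ):ℝ) := by norm_num
        _ ≤ ((|x j0| : ℤ):ℝ) := by exact_mod_cast this
        _ = |(x j0 : ℝ)| := by push_cast; ring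
    have hbig : ∀ mN : ℕ, (mN:ℝ) * |(x j0:ℝ)| ≤ C := by
      intro mN
      have h1 := hC _ (hmemP mN)
      have h2 := norm_le_pi_norm (fun j => (mN:ℝ) * (x j:ℝ)) j0
      have h3 : ‖(mN:ℝ) * (x j0:ℝ)‖ = (mN:ℝ) * |(x j0:ℝ)| := by
        rw [Real.norm_eq_abs, abs_mul, Nat.abs_cast]
      linarith [h2.trans h1, h3.symm.le]
    have h4 := hbig (⌈C⌉₊ + 1)
    have h5 : C ≤ (⌈C⌉₊ : ℝ) := Nat.le_ceil C
    have h6 : ((⌈C⌉₊ + 1 : ℕ) : ℝ) = (⌈C⌉₊:ℝ) + 1 := by push_cast; ring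
    nlinarith [mul_le_mul_of_nonneg_left hxj (by positivity : (0:ℝ) ≤ ((⌈C⌉₊:ℝ) + 1))]
  -- S is finite
  have hSfin : S.Finite := by
    set M : ℤ := max ⌈C * (lam:ℝ)⌉ 0 with hM
    apply Set.Finite.subset (Set.finite_Icc (fun _ : Fin d => -M) (fun _ => M))
    intro x hx
    have hy : (fun j => (x j : ℝ) / (lam:ℝ)) ∈
        {x : Fin d → ℝ | ∀ i, (∑ j, (A i j : ℝ) * x j) ≤ b i} := by
      intro i
      have h1 : ((∑ j, A i j * x j : ℤ):ℝ) ≤ (lam:ℝ) * (b i : ℝ) := by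
        exact_mod_cast hx i
      have hEq : (∑ j, (A i j:ℝ) * ((x j:ℝ)/(lam:ℝ))) = ((∑ j, A i j * x j : ℤ):ℝ) / (lam:ℝ) := by
        push_cast
        rw [Finset.sum_div]
        exact Finset.sum_congr rfl (fun j _ => by ring)
      rw [Set.mem_setOf_eq] at *
      rw [hEq, div_le_iff₀ hlamR]
      linarith
    have h2 := hC _ hy
    have hcoord : ∀ j, |(x j : ℝ)| ≤ C * (lam:ℝ) := by
      intro j
      have h3 := (norm_le_pi_norm (fun j => (x j:ℝ)/(lam:ℝ)) j).trans h2
      rw [Real.norm_eq_abs, abs_div, abs_of_pos hlamR, div_le_iff₀ hlamR] at h3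
      linarith
    have hMR : C * (lam:ℝ) ≤ (M:ℝ) := by
      have := Int.le_ceil (C * (lam:ℝ))
      have h4 : (⌈C * (lam:ℝ)⌉ : ℝ) ≤ (M:ℝ) := by exact_mod_cast le_max_left _ _
      linarith
    constructor
    · intro j
      have := (abs_le.mp (hcoord j)).1
      have h5 : -(M:ℝ) ≤ (x j : ℝ) := by linarith
      exact_mod_cast h5
    · intro j
      have := (abs_le.mp (hcoord j)).2
      have h5 : (x j : ℝ) ≤ (M:ℝ) := by linarith
      exact_mod_cast h5
  -- 0 ∈ S
  have h0S : (0 : Fin d → ℤ) ∈ S := by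
    intro i
    have : (∑ j, A i j * (0 : Fin d → ℤ) j) = 0 := by simp
    rw [this]
    have : (0:ℚ) ≤ lam * (b i : ℚ) :=
      mul_nonneg hlam.le (by exact_mod_cast hb i)
    simpa using this
  -- T k ⊆ S for k in range
  have hTsubS : ∀ k ∈ Finset.Icc (1:ℤ) m, T k ⊆ S := by
    intro k hk x hx i
    obtain ⟨hk1, hk2⟩ := Finset.mem_Icc.mp hk
    have h1 : (k:ℚ) ≤ (r:ℚ) * lam := by exact_mod_cast Int.le_floor.mp hk2
    have h2 : (k:ℚ)/(r:ℚ) ≤ lam := by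
      rw [div_le_iff₀ rQ0]; linarith
    have h3 := hx.1 i
    have h4 : (0:ℚ) ≤ (b i : ℚ) := by exact_mod_cast hb i
    calc ((∑ j, A i j * x j : ℤ):ℚ) ≤ ((k:ℚ)/(r:ℚ)) * (b i:ℚ) := h3
      _ ≤ lam * (b i:ℚ) := mul_le_mul_of_nonneg_right h2 h4
  -- 0 ∉ T k for 1 ≤ k
  have h0T : ∀ k : ℤ, 1 ≤ k → (0 : Fin d → ℤ) ∉ T k := by
    intro k hk h
    obtain ⟨i, hi, hEq⟩ := h.2
    have h1 : (∑ j, A i j * (0 : Fin d → ℤ) j) = 0 := by simp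
    rw [h1] at hEq
    have hbQ : (0:ℚ) < (b i : ℚ) := by exact_mod_cast hbpos i hi
    have hkQ : (0:ℚ) < (k:ℚ) := by exact_mod_cast hk.trans_lt' zero_lt_one
    have : (0:ℚ) < ((k:ℚ)/(r:ℚ)) * (b i:ℚ) := mul_pos (div_pos hkQ rQ0) hbQ
    rw [← hEq] at this
    simp at this
  -- disjointness
  have hdisj : ∀ k k' : ℤ, k < k' → ∀ x, x ∈ T k → x ∈ T k' → False := by
    intro k k' hkk' x hx hx'
    obtain ⟨i, hi, hEq⟩ := hx'.2
    have h1 := hx.1 i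
    rw [hEq] at h1
    have hbQ : (0:ℚ) < (b i : ℚ) := by exact_mod_cast hbpos i hi
    have hkk'Q : (k:ℚ) < (k':ℚ) := by exact_mod_cast hkk'
    rw [div_mul_eq_mul_div, div_mul_eq_mul_div, div_le_div_iff₀ rQ0 rQ0] at h1
    nlinarith [mul_lt_mul_of_pos_right hkk'Q (mul_pos hbQ rQ0)]
  -- existence: every nonzero x in S lies in some T k, 1 ≤ k ≤ m
  have hexist : ∀ x ∈ S, x ≠ 0 → ∃ k ∈ Finset.Icc (1:ℤ) m, x ∈ T k := by
    intro x hxS hx0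
    have hneg : ¬ (∀ i, (∑ j, A i j * x j) ≤ 0) := fun h => hx0 (hzero x h)
    push_neg at hneg
    obtain ⟨i0, hi0⟩ := hneg
    have hbi0 : b i0 ≠ 0 := by
      intro hbb
      have h1 := hxS i0
      rw [hbb] at h1
      norm_num at h1
      have h2 : (∑ j, A i0 j * x j) ≤ 0 := by exact_mod_cast h1
      omega
    set F : Finset (Fin n) := Finset.univ.filter (fun i => b i ≠ 0) with hF
    have hFne : F.Nonempty := ⟨i0, by simp [hF, hbi0]⟩
    set c : Fin n → ℤ := fun i => (∑ j, A i j * x j) * (r / b i) with hc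
    set k : ℤ := F.sup' hFne c with hk
    have hk1 : 1 ≤ k := by
      have h1 : c i0 ≤ k := Finset.le_sup' c (by simp [hF, hbi0])
      have h2 : 1 ≤ c i0 := by
        have hq := hqpos i0 hbi0
        have h3 : 1 ≤ (∑ j, A i0 j * x j) := hi0
        have h4 : c i0 = (∑ j, A i0 j * x j) * (r / b i0) := rfl
        nlinarith
      exact h2.trans h1
    have hkm : k ≤ m := by
      apply Finset.sup'_le
      intro i hiF
      have hi : b i ≠ 0 := by simpa [hF] using hiF
      have hbQ : (0:ℚ) < (b i : ℚ) := by exact_mod_cast hbpos i hi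
      rw [hm, Int.le_floor]
      have h1 : ((c i : ℤ):ℚ) * (b i:ℚ) = ((∑ j, A i j * x j : ℤ):ℚ) * (r:ℚ) := by
        have : c i * b i = (∑ j, A i j * x j) * r := by
          rw [hc]
          rw [mul_assoc, mul_comm (r / b i), hbq i hi]
        exact_mod_cast congrArg (Int.cast : ℤ → ℚ) this
      have h2 : ((∑ j, A i j * x j : ℤ):ℚ) ≤ lam * (b i:ℚ) := hxS i
      have h3 : ((c i : ℤ):ℚ) * (b i:ℚ) ≤ ((r:ℚ) * lam) * (b i:ℚ) := by
        rw [h1]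
        nlinarith
      exact le_of_mul_le_mul_right h3 hbQ
    refine ⟨k, Finset.mem_Icc.mpr ⟨hk1, hkm⟩, ?_, ?_⟩
    · intro i
      by_cases hi : b i = 0
      · have h1 := hxS i
        rw [hi] at h1 ⊢
        simpa using h1
      · exact (hle i hi k x).mpr (Finset.le_sup' c (by simp [hF, hi]))
    · obtain ⟨i1, hi1F, hi1⟩ := Finset.exists_mem_eq_sup' hFne c
      have hi1' : b i1 ≠ 0 := by simpa [hF] using hi1F
      exact ⟨i1, hi1', (heq i1 hi1' k x).mpr hi1.symm⟩
  -- assemble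
  have hTfin : ∀ k : ℤ, (T k ∩ S).Finite := fun k => hSfin.subset Set.inter_subset_right
  have hTcard : ∀ k ∈ Finset.Icc (1:ℤ) m, (T k).ncard = ((hTfin k).toFinset).card := by
    intro k hk
    have hEq2 : T k ∩ S = T k := Set.inter_eq_self_of_subset_left (hTsubS k hk)
    have hEq3 : (T k).ncard = (T k ∩ S).ncard := by rw [hEq2]
    rw [hEq3]
    exact Set.ncard_eq_toFinset_card _ (hTfin k)
  rw [Set.ncard_eq_toFinset_card _ hSfin, Finset.sum_congr rfl hTcard]
  have hunion : hSfin.toFinset =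
      insert (0 : Fin d → ℤ) ((Finset.Icc (1:ℤ) m).biUnion (fun k => (hTfin k).toFinset)) := by
    ext x
    simp only [Set.Finite.mem_toFinset, Finset.mem_insert, Finset.mem_biUnion, Set.mem_inter_iff]
    constructor
    · intro hx
      rcases eq_or_ne x 0 with h | h
      · exact Or.inl h
      · obtain ⟨k, hk, hxT⟩ := hexist x hx h
        exact Or.inr ⟨k, hk, hxT, hx⟩
    · rintro (h | ⟨k, hk, hxT, hxS⟩)
      · rw [h]; exact h0S
      · exact hxS
  have hdisj' : ∀ k ∈ Finset.Icc (1:ℤ) m, ∀ k' ∈ Finset.Icc (1:ℤ) m, k ≠ k' →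
      Disjoint ((hTfin k).toFinset) ((hTfin k').toFinset) := by
    intro k _ k' _ hkk'
    rw [Finset.disjoint_left]
    intro x hx hx'
    rw [Set.Finite.mem_toFinset] at hx hx'
    rcases lt_or_gt_of_ne hkk' with h | h
    · exact hdisj k k' h x hx.1 hx'.1
    · exact hdisj k' k h x hx'.1 hx.1
  have hnot : (0 : Fin d → ℤ) ∉ (Finset.Icc (1:ℤ) m).biUnion (fun k => (hTfin k).toFinset) := by
    intro hmem
    obtain ⟨k, hk, h0⟩ := Finset.mem_biUnion.mp hmem
    rw [Set.Finite.mem_toFinset] at h0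
    exact h0T k (Finset.mem_Icc.mp hk).1 h0.1
  rw [hunion, Finset.card_insert_of_notMem hnot, Finset.card_biUnion hdisj', add_comm]
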